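/- Let z be a vector in an inner product space, P an orthogonal projection, 0 < φ < 1, and c ≥ 0. If ‖P z‖ ≥ φ‖z‖ − c, then ‖(I − P) z‖ ≤ √(1 − φ²)·‖z‖ + (φ / √(1 − φ²))·c. -/

import Mathlib

open MeasureTheory ProbabilityTheory
open scoped Matrix

/-- Spectral (ℓ₂ operator) norm of a real matrix. -/
noncomputable def specNorm {m n : ℕ} (A : Matrix (Fin m) (Fin n) ℝ) : ℝ :=
  ‖LinearMap.toContinuousLinearMap (Matrix.toEuclideanLin A)‖

/-- Frobenius norm of a real matrix. -/
noncomputable def frobNorm {m n : ℕ} (A : Matrix (Fin m) (Fin n) ℝ) : ℝ :=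
  Real.sqrt (∑ i, ∑ j, (A i j)^2)

/-- Euclidean norm of a vector. -/
noncomputable def vecNorm {p : ℕ} (x : Fin p → ℝ) : ℝ := Real.sqrt (∑ i, (x i)^2)

/-- Max (ℓ∞) norm of a vector. -/
noncomputable def vecInf {p : ℕ} (x : Fin p → ℝ) : ℝ := ⨆ i, |x i|

/-- The standard Gaussian measure N(0, I_p) on ℝ^p. -/
noncomputable def stdGaussian (p : ℕ) : Measure (Fin p → ℝ) :=
  Measure.pi (fun _ => gaussianReal 0 1)

lemma aux_resid (t a r φ c : ℝ) (hφ : 0 < φ) (hφ1 : φ < 1) (hc : 0 ≤ c)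
    (ht : 0 ≤ t) (ha : 0 ≤ a) (hr : 0 ≤ r)
    (hpy : t^2 = a^2 + r^2) (h : φ*t - c ≤ a) :
    r ≤ Real.sqrt (1-φ^2) * t + (φ / Real.sqrt (1-φ^2)) * c := by
  set s := Real.sqrt (1-φ^2) with hs
  have h1 : 0 < 1 - φ^2 := by nlinarith
  have hs0 : 0 < s := Real.sqrt_pos.2 h1
  have hs2 : s^2 = 1 - φ^2 := Real.sq_sqrt h1.le
  have hs1 : s ≤ 1 := by nlinarith [sq_nonneg (s-1)]
  have key : s * r ≤ (1-φ^2)*t + φ*c := by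
    rcases le_or_gt (φ*t) c with hca | hca
    · have hrt : r ≤ t := by nlinarith
      nlinarith
    · have hr2 : r^2 ≤ t^2 - (φ*t-c)^2 := by nlinarith
      have hrhs : 0 ≤ (1-φ^2)*t + φ*c := by positivity
      nlinarith [sq_nonneg c, mul_nonneg hs0.le hr]
  have hdiv : r ≤ ((1-φ^2)*t + φ*c)/s := by
    rw [le_div_iff₀ hs0]; linarith [key]
  calc r ≤ ((1-φ^2)*t + φ*c)/s := hdiv
    _ = s*t + (φ/s)*c := by rw [← hs2]; field_simp

/-- If ‖P z‖ ≥ φ‖z‖ − c, then ‖(I − P)z‖ ≤ √(1−φ²)‖z‖ + (φ/√(1−φ²))·c. -/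
theorem residual_orthogonal_bound {E : Type*} [NormedAddCommGroup E]
    [InnerProductSpace ℝ E] [CompleteSpace E]
    (V : Submodule ℝ E) [V.HasOrthogonalProjection]
    (z : E) (φ c : ℝ) (hφ : 0 < φ) (hφ1 : φ < 1) (hc : 0 ≤ c)
    (h : φ * ‖z‖ - c ≤ ‖(V.orthogonalProjectionOnto z : E)‖) :
    ‖z - (V.orthogonalProjectionOnto z : E)‖
      ≤ Real.sqrt (1 - φ^2) * ‖z‖ + (φ / Real.sqrt (1 - φ^2)) * c := by
  have hmem : (V.orthogonalProjectionOnto z : E) ∈ V := (V.orthogonalProjectionOnto z).2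
  have horth : z - (V.orthogonalProjectionOnto z : E) ∈ Vᗮ :=
    V.sub_starProjection_mem_orthogonal z
  have hinner : (inner ℝ ((V.orthogonalProjectionOnto z : E)) (z - (V.orthogonalProjectionOnto z : E)) : ℝ) = 0 :=
    horth _ hmem
  have hpy : ‖z‖^2 = ‖(V.orthogonalProjectionOnto z : E)‖^2
      + ‖z - (V.orthogonalProjectionOnto z : E)‖^2 := by
    have := norm_add_sq_real (V.orthogonalProjectionOnto z : E)
      (z - (V.orthogonalProjectionOnto z : E))
    rw [add_sub_cancel, hinner] at this
    linarith
  exact aux_resid ‖z‖ _ _ φ c hφ hφ1 hc (norm_nonneg _) (norm_nonneg _) (norm_nonneg _) hpy h
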